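/- For every fixed ψ₀ ∈ ℝ and τ ∈ ℝᵖ, the map (β₁,…,β_p) ↦ Q(β₁,…,β_p, ψ₀, τ₁,…,τ_p) is a convex function on ℝᵖ; and for every fixed ψ₀ ∈ ℝ and β ∈ ℝᵖ, the map (τ₁,…,τ_p) ↦ Q(β₁,…,β_p, ψ₀, τ₁,…,τ_p) is a convex function on ℝᵖ. -/

import Mathlib

/-- Soft-thresholding operator `S(x, u) = sign(x) · (|x| − u)₊`. -/
noncomputable def softThresh (x u : ℝ) : ℝ := Real.sign x * max (|x| - u) 0

/-- Reparametrized weighted loss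
`L*(θ) = (1/(2n)) Σᵢ wᵢ (Yᵢ − ψ₀Aᵢ − Σⱼ Xᵢⱼβⱼ − Σⱼ ψ₀τⱼβⱼ AᵢXᵢⱼ)²`. -/
noncomputable def Lstar (n p : ℕ) (Y A : Fin n → ℝ) (X : Fin n → Fin p → ℝ)
    (w : Fin n → ℝ) (β : Fin p → ℝ) (ψ0 : ℝ) (τ : Fin p → ℝ) : ℝ :=
  1 / (2 * (n : ℝ)) * ∑ i, w i *
    (Y i - ψ0 * A i - (∑ j, X i j * β j) - ∑ j, ψ0 * τ j * β j * A i * X i j) ^ 2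

/-- Penalized objective
`Q(θ) = L*(θ) + λ(1−α)(Σⱼ|βⱼ| + |ψ₀|) + λα Σⱼ|τⱼ|`. -/
noncomputable def Qobj (n p : ℕ) (Y A : Fin n → ℝ) (X : Fin n → Fin p → ℝ)
    (w : Fin n → ℝ) (lam alpha : ℝ) (β : Fin p → ℝ) (ψ0 : ℝ) (τ : Fin p → ℝ) : ℝ :=
  Lstar n p Y A X w β ψ0 τ
    + lam * (1 - alpha) * ((∑ j, |β j|) + |ψ0|) + lam * alpha * ∑ j, |τ j|

/-- Sum of convex functions is convex. -/
lemma convexOn_finset_sum {ι E : Type*} [AddCommGroup E] [Module ℝ E]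
    (t : Finset ι) (f : ι → E → ℝ) (hf : ∀ i ∈ t, ConvexOn ℝ Set.univ (f i)) :
    ConvexOn ℝ Set.univ (fun x => ∑ i ∈ t, f i x) := by
  classical
  induction t using Finset.induction_on with
  | empty => simpa using convexOn_const (0 : ℝ) convex_univ
  | @insert a s hx ih =>
    simp only [Finset.sum_insert hx]
    exact (hf a (Finset.mem_insert_self a s)).add
      (ih fun i hi => hf i (Finset.mem_insert_of_mem hi))

/-- The linear functional `x ↦ ∑ j, V j * x j`. -/
noncomputable def dotL (p : ℕ) (V : Fin p → ℝ) : (Fin p → ℝ) →ₗ[ℝ] ℝ where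
  toFun x := ∑ j, V j * x j
  map_add' x y := by simp [mul_add, Finset.sum_add_distrib]
  map_smul' c x := by simp [Finset.mul_sum, mul_left_comm]

lemma convexOn_sq_affine (p : ℕ) (a : ℝ) (V : Fin p → ℝ) :
    ConvexOn ℝ Set.univ (fun x : Fin p → ℝ => (a - ∑ j, V j * x j) ^ 2) := by
  have h := (Even.convexOn_pow (even_two : Even 2)).comp_affineMap
    (AffineMap.const ℝ (Fin p → ℝ) a - (dotL p V).toAffineMap)
  have heq : ((fun y : ℝ => y ^ 2) ∘ ⇑(AffineMap.const ℝ (Fin p → ℝ) a - (dotL p V).toAffineMap))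
      = fun x : Fin p → ℝ => (a - ∑ j, V j * x j) ^ 2 := by
    funext x
    simp [Function.comp, dotL]
  rw [heq] at h
  simpa using h

/-- Main convexity lemma: a nonnegative weighted sum of squared affine
functions plus an `ℓ¹` term plus a constant is convex. -/
lemma key_convex (n p : ℕ) (c : ℝ) (hc : 0 ≤ c) (w : Fin n → ℝ) (hw : ∀ i, 0 ≤ w i)
    (a : Fin n → ℝ) (V : Fin n → Fin p → ℝ) (d e : ℝ) (hd : 0 ≤ d) :
    ConvexOn ℝ Set.univ (fun x : Fin p → ℝ =>
      c * ∑ i, w i * (a i - ∑ j, V i j * x j) ^ 2 + d * ∑ j, |x j| + e) := by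
  have h1 : ConvexOn ℝ Set.univ (fun x : Fin p → ℝ =>
      c * ∑ i, w i * (a i - ∑ j, V i j * x j) ^ 2) := by
    have := (convexOn_finset_sum Finset.univ
      (fun i (x : Fin p → ℝ) => w i * (a i - ∑ j, V i j * x j) ^ 2)
      (fun i _ => by simpa [smul_eq_mul] using (convexOn_sq_affine p (a i) (V i)).smul (hw i))).smul hc
    simpa [smul_eq_mul] using this
  have h2 : ConvexOn ℝ Set.univ (fun x : Fin p → ℝ => d * ∑ j, |x j|) := by
    have := (convexOn_finset_sum Finset.univ (fun j (x : Fin p → ℝ) => |x j|)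
      (fun j _ => by
        have h := (convexOn_univ_norm (E := ℝ)).comp_affineMap
          ((LinearMap.proj j : (Fin p → ℝ) →ₗ[ℝ] ℝ).toAffineMap)
        simpa [Function.comp_def, Real.norm_eq_abs] using h)).smul hd
    simpa [smul_eq_mul] using this
  have h3 : ConvexOn ℝ Set.univ (fun _ : Fin p → ℝ => e) := convexOn_const e convex_univ
  exact (h1.add h2).add h3

/-- Blockwise convexity of `Q`: for fixed `ψ₀, τ` the map `β ↦ Q(β, ψ₀, τ)` is
convex on `ℝᵖ`, and for fixed `ψ₀, β` the map `τ ↦ Q(β, ψ₀, τ)` is convex on `ℝᵖ`. -/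
theorem stmt11 (n p : ℕ) (hn : 1 ≤ n) (Y A : Fin n → ℝ) (X : Fin n → Fin p → ℝ)
    (w : Fin n → ℝ) (hw : ∀ i, 0 ≤ w i) (hA : ∀ i, A i = 0 ∨ A i = 1)
    (lam alpha : ℝ) (hlam : 0 ≤ lam) (halpha : 0 < alpha ∧ alpha < 1) :
    (∀ (ψ0 : ℝ) (τ : Fin p → ℝ),
      ConvexOn ℝ Set.univ fun β : Fin p → ℝ => Qobj n p Y A X w lam alpha β ψ0 τ) ∧
    (∀ (ψ0 : ℝ) (β : Fin p → ℝ),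
      ConvexOn ℝ Set.univ fun τ : Fin p → ℝ => Qobj n p Y A X w lam alpha β ψ0 τ) := by
  have hc : (0 : ℝ) ≤ 1 / (2 * (n : ℝ)) := by positivity
  have hd1 : (0 : ℝ) ≤ lam * (1 - alpha) :=
    mul_nonneg hlam (by linarith [halpha.2])
  have hd2 : (0 : ℝ) ≤ lam * alpha := mul_nonneg hlam halpha.1.le
  have hsum1 : ∀ (ψ0 : ℝ) (τ : Fin p → ℝ) (i : Fin n) (β : Fin p → ℝ),
      ∑ j, (X i j + ψ0 * τ j * A i * X i j) * β j
        = (∑ j, X i j * β j) + ∑ j, ψ0 * τ j * β j * A i * X i j := by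
    intro ψ0 τ i β
    rw [← Finset.sum_add_distrib]
    exact Finset.sum_congr rfl fun j _ => by ring
  have hsum2 : ∀ (ψ0 : ℝ) (β : Fin p → ℝ) (i : Fin n) (τ : Fin p → ℝ),
      ∑ j, (ψ0 * β j * A i * X i j) * τ j = ∑ j, ψ0 * τ j * β j * A i * X i j :=
    fun ψ0 β i τ => Finset.sum_congr rfl fun j _ => by ring
  constructor
  · intro ψ0 τ
    have h := key_convex n p (1 / (2 * (n : ℝ))) hc w hw
      (fun i => Y i - ψ0 * A i)
      (fun i j => X i j + ψ0 * τ j * A i * X i j)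
      (lam * (1 - alpha))
      (lam * (1 - alpha) * |ψ0| + lam * alpha * ∑ j, |τ j|) hd1
    have heq : (fun β : Fin p → ℝ => Qobj n p Y A X w lam alpha β ψ0 τ)
        = fun β : Fin p → ℝ =>
          1 / (2 * (n : ℝ)) * ∑ i, w i *
              ((Y i - ψ0 * A i) - ∑ j, (X i j + ψ0 * τ j * A i * X i j) * β j) ^ 2
            + lam * (1 - alpha) * ∑ j, |β j|
            + (lam * (1 - alpha) * |ψ0| + lam * alpha * ∑ j, |τ j|) := by
      funext β
      have hres : ∀ i, Y i - ψ0 * A i - (∑ j, X i j * β j) - ∑ j, ψ0 * τ j * β j * A i * X i j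
          = (Y i - ψ0 * A i) - ∑ j, (X i j + ψ0 * τ j * A i * X i j) * β j := by
        intro i
        rw [hsum1 ψ0 τ i β]
        ring
      simp only [Qobj, Lstar, hres]
      ring
    rw [heq]
    exact h
  · intro ψ0 β
    have h := key_convex n p (1 / (2 * (n : ℝ))) hc w hw
      (fun i => Y i - ψ0 * A i - ∑ j, X i j * β j)
      (fun i j => ψ0 * β j * A i * X i j)
      (lam * alpha)
      (lam * (1 - alpha) * ((∑ j, |β j|) + |ψ0|)) hd2
    have heq : (fun τ : Fin p → ℝ => Qobj n p Y A X w lam alpha β ψ0 τ)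
        = fun τ : Fin p → ℝ =>
          1 / (2 * (n : ℝ)) * ∑ i, w i *
              ((Y i - ψ0 * A i - ∑ j, X i j * β j) - ∑ j, (ψ0 * β j * A i * X i j) * τ j) ^ 2
            + lam * alpha * ∑ j, |τ j|
            + lam * (1 - alpha) * ((∑ j, |β j|) + |ψ0|) := by
      funext τ
      have hres : ∀ i, Y i - ψ0 * A i - (∑ j, X i j * β j) - ∑ j, ψ0 * τ j * β j * A i * X i j
          = (Y i - ψ0 * A i - ∑ j, X i j * β j) - ∑ j, (ψ0 * β j * A i * X i j) * τ j := by
        intro i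
        rw [hsum2 ψ0 β i τ]
      simp only [Qobj, Lstar, hres]
      ring
    rw [heq]
    exact h
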